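/- Let f : ℝ → ℝ be twice differentiable with f'' (u) - (2/(c₃²+1)) f'(u)² - 2 = 0 for all u in an open interval, where c₃ is a real constant. Then there exist constants a, b such that f(u) = -((c₃²+1)/2) ln |cos((2/√(c₃²+1)) u - a)| + b on that interval. -/

import Mathlib

open Set Real

lemma const_on_Ioo {α β : ℝ} {G : ℝ → ℝ}
    (h : ∀ u ∈ Set.Ioo α β, HasDerivAt G 0 u) {x y : ℝ}
    (hx : x ∈ Set.Ioo α β) (hy : y ∈ Set.Ioo α β) : G x = G y := by
  apply (convex_Ioo α β).is_const_of_fderivWithin_eq_zero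
    (fun u hu => ((h u hu).differentiableAt).differentiableWithinAt) ?_ hx hy
  intro u hu
  rw [fderivWithin_of_isOpen isOpen_Ioo hu]
  rw [(h u hu).hasFDerivAt.fderiv]
  ext; simp

theorem stmt_0 (c₃ α β : ℝ) (f : ℝ → ℝ)
    (hd1 : ∀ u ∈ Set.Ioo α β, DifferentiableAt ℝ f u)
    (hd2 : ∀ u ∈ Set.Ioo α β, DifferentiableAt ℝ (deriv f) u)
    (hode : ∀ u ∈ Set.Ioo α β,
      deriv (deriv f) u - (2 / (c₃ ^ 2 + 1)) * (deriv f u) ^ 2 - 2 = 0) :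
    ∃ a b : ℝ, ∀ u ∈ Set.Ioo α β,
      f u = -((c₃ ^ 2 + 1) / 2) *
          Real.log |Real.cos ((2 / Real.sqrt (c₃ ^ 2 + 1)) * u - a)| + b := by
  rcases Set.eq_empty_or_nonempty (Set.Ioo α β) with he | ⟨u₀, hu₀⟩
  · exact ⟨0, 0, fun u hu => absurd (he ▸ hu) (Set.notMem_empty u)⟩
  set k := Real.sqrt (c₃ ^ 2 + 1) with hkdef
  have hc : (0:ℝ) < c₃ ^ 2 + 1 := by positivity
  have hk : 0 < k := Real.sqrt_pos.mpr hc
  have hk2 : k ^ 2 = c₃ ^ 2 + 1 := Real.sq_sqrt hc.le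
  have hkne : k ≠ 0 := hk.ne'
  -- Step 1: G := arctan (f'/k) - (2/k) u has zero derivative
  set G : ℝ → ℝ := fun u => Real.arctan (deriv f u / k) - (2 / k) * u with hGdef
  have hG : ∀ u ∈ Set.Ioo α β, HasDerivAt G 0 u := by
    intro u hu
    have hf'' : HasDerivAt (deriv f) (deriv (deriv f) u) u := (hd2 u hu).hasDerivAt
    have hodeu := hode u hu
    have hval : deriv (deriv f) u = (2 / k ^ 2) * (deriv f u) ^ 2 + 2 := by
      rw [hk2]; linarith
    have h1 : HasDerivAt (fun u => deriv f u / k)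
        ((deriv (deriv f) u) / k) u := hf''.div_const k
    have h2 : HasDerivAt (fun u => Real.arctan (deriv f u / k))
        ((1 / (1 + (deriv f u / k) ^ 2)) * ((deriv (deriv f) u) / k)) u :=
      (Real.hasDerivAt_arctan (deriv f u / k)).comp (h := fun u => deriv f u / k) u h1
    have h3 : HasDerivAt (fun u => (2 / k) * u) (2 / k) u := by
      simpa using (hasDerivAt_id u).const_mul (2 / k)
    have h4 := h2.sub h3
    have hpos : (0:ℝ) < 1 + (deriv f u / k) ^ 2 := by positivity
    have heq : (1 / (1 + (deriv f u / k) ^ 2)) * ((deriv (deriv f) u) / k) - 2 / k = 0 := by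
      rw [hval]; field_simp; ring
    rw [heq] at h4
    exact h4
  set a : ℝ := (2 / k) * u₀ - Real.arctan (deriv f u₀ / k) with hadef
  have harctan : ∀ u ∈ Set.Ioo α β,
      Real.arctan (deriv f u / k) = (2 / k) * u - a := by
    intro u hu
    have := const_on_Ioo hG hu hu₀
    simp only [hGdef] at this
    rw [hadef]; linarith
  -- θ u := (2/k) u - a ; cos positive, f' = k tan θ
  have hcos : ∀ u ∈ Set.Ioo α β, 0 < Real.cos ((2 / k) * u - a) := by
    intro u hu
    rw [← harctan u hu]
    exact Real.cos_pos_of_mem_Ioo ⟨Real.neg_pi_div_two_lt_arctan _, Real.arctan_lt_pi_div_two _⟩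
  have hf' : ∀ u ∈ Set.Ioo α β,
      deriv f u = k * Real.tan ((2 / k) * u - a) := by
    intro u hu
    rw [← harctan u hu, Real.tan_arctan]
    field_simp
  -- Step 3: F := -(k²/2) log (cos θ)
  set F : ℝ → ℝ := fun u => -(k ^ 2 / 2) * Real.log (Real.cos ((2 / k) * u - a)) with hFdef
  have hF : ∀ u ∈ Set.Ioo α β, HasDerivAt F (deriv f u) u := by
    intro u hu
    have hθ : HasDerivAt (fun u => (2 / k) * u - a) (2 / k) u := by
      simpa using ((hasDerivAt_id u).const_mul (2 / k)).sub_const a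
    have hcosu := hcos u hu
    have h1 : HasDerivAt (fun u => Real.cos ((2 / k) * u - a))
        (-Real.sin ((2 / k) * u - a) * (2 / k)) u := (Real.hasDerivAt_cos _).comp u hθ
    have h2 : HasDerivAt (fun u => Real.log (Real.cos ((2 / k) * u - a)))
        ((Real.cos ((2 / k) * u - a))⁻¹ * (-Real.sin ((2 / k) * u - a) * (2 / k))) u :=
      (Real.hasDerivAt_log hcosu.ne').comp (h := fun u => Real.cos ((2 / k) * u - a)) u h1
    have h3 := h2.const_mul (-(k ^ 2 / 2))
    have key : ∀ s c : ℝ, c ≠ 0 → -(k ^ 2 / 2) * (c⁻¹ * (-s * (2 / k))) = k * (s / c) := by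
      intro s c hcne; field_simp
    have : -(k ^ 2 / 2) * ((Real.cos ((2 / k) * u - a))⁻¹ *
        (-Real.sin ((2 / k) * u - a) * (2 / k))) = deriv f u := by
      rw [hf' u hu, Real.tan_eq_sin_div_cos, key _ _ hcosu.ne']
    rw [this] at h3
    exact h3
  -- Step 4: f - F constant
  set b : ℝ := f u₀ - F u₀ with hbdef
  refine ⟨a, b, fun u hu => ?_⟩
  have hsub : ∀ u ∈ Set.Ioo α β, HasDerivAt (fun u => f u - F u) 0 u := by
    intro u hu
    have := (hd1 u hu).hasDerivAt.sub (hF u hu); rwa [sub_self] at this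
  have hc2 := const_on_Ioo hsub hu hu₀
  have hfu : f u = F u + b := by rw [hbdef]; linarith
  rw [hfu, hFdef]
  rw [abs_of_pos (hcos u hu), ← hk2]
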